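/- arXiv:2112.04389 — 3 statements merged into one kernel-verified Lean document; each statement's English description precedes it below -/
import Mathlib

section
/- Identifiability of the MMDF model: suppose Π, Π̃ are n×K membership matrices of rank K with nonnegative entries, each row summing to 1, and there exists an index set I of K rows such that Π(I,:) = Π̃(I,:) = I_K (the K×K identity). Suppose P, P̃ are K×K symmetric matrices of rank K. If ρ·Π·P·Πᵀ = ρ·Π̃·P̃·Π̃ᵀ for some ρ > 0, then Π = Π̃ and P = P̃. -/
open Matrix MeasureTheory ProbabilityTheory

/-- Smallest eigenvalue of a (Hermitian) real matrix. -/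
noncomputable def eigMin {m : Type*} [Fintype m] [DecidableEq m]
    (M : Matrix m m ℝ) : ℝ :=
  if h : M.IsHermitian then ⨅ i, h.eigenvalues i else 0

/-- Largest eigenvalue of a (Hermitian) real matrix. -/
noncomputable def eigMax {m : Type*} [Fintype m] [DecidableEq m]
    (M : Matrix m m ℝ) : ℝ :=
  if h : M.IsHermitian then ⨆ i, h.eigenvalues i else 0

/-- Singular values of a real matrix: square roots of eigenvalues of `Mᴴ * M`. -/
noncomputable def singVals {m n : Type*} [Fintype m] [Fintype n] [DecidableEq n]
    (M : Matrix m n ℝ) : n → ℝ :=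
  fun i => Real.sqrt ((Matrix.isHermitian_conjTranspose_mul_self M).eigenvalues i)

/-- `k`-th largest value (1-indexed) of a tuple of reals. -/
noncomputable def kthLargest {n : ℕ} (f : Fin n → ℝ) (k : ℕ)
    (hk1 : 1 ≤ k) (hk2 : k ≤ n) : ℝ :=
  f (Tuple.sort f ⟨n - k, by omega⟩)

/-- `k`-th largest singular value (1-indexed) of a real square-indexed matrix. -/
noncomputable def sigma' {m : Type*} {n : ℕ} [Fintype m]
    (M : Matrix m (Fin n) ℝ) (k : ℕ) (hk1 : 1 ≤ k) (hk2 : k ≤ n) : ℝ :=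
  kthLargest (singVals M) k hk1 hk2

/-- Two-to-infinity norm: maximum row ℓ₂-norm. -/
noncomputable def twoInfNorm {m n : Type*} [Fintype m] [Fintype n]
    (M : Matrix m n ℝ) : ℝ :=
  ⨆ i, Real.sqrt (∑ j, (M i j) ^ 2)

/-- Spectral norm: largest singular value. -/
noncomputable def specNorm {m n : Type*} [Fintype m] [Fintype n] [DecidableEq n]
    (M : Matrix m n ℝ) : ℝ :=
  ⨆ i, singVals M i

/-- Maximum absolute row sum norm. -/
noncomputable def rowSumNorm {m n : Type*} [Fintype m] [Fintype n]
    (M : Matrix m n ℝ) : ℝ :=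
  ⨆ i, ∑ j, |M i j|

theorem stmt_1 {n K : ℕ} (M M' : Matrix (Fin n) (Fin K) ℝ)
    (P P' : Matrix (Fin K) (Fin K) ℝ) (ρ : ℝ) (hρ : 0 < ρ)
    (g : Fin K → Fin n)
    (hM : M.rank = K) (hM' : M'.rank = K)
    (hMnn : ∀ i k, 0 ≤ M i k) (hM'nn : ∀ i k, 0 ≤ M' i k)
    (hMrow : ∀ i, ∑ k, M i k = 1) (hM'row : ∀ i, ∑ k, M' i k = 1)
    (hMg : M.submatrix g id = 1) (hM'g : M'.submatrix g id = 1)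
    (hPs : P.IsSymm) (hP's : P'.IsSymm) (hP : P.rank = K) (hP' : P'.rank = K)
    (heq : ρ • (M * P * Mᵀ) = ρ • (M' * P' * M'ᵀ)) :
    M = M' ∧ P = P' := by
  have heq' : M * P * Mᵀ = M' * P' * M'ᵀ :=
    smul_right_injective _ (ne_of_gt hρ) heq
  -- P = P'
  have hsub : ∀ (A : Matrix (Fin n) (Fin K) ℝ) (Q : Matrix (Fin K) (Fin K) ℝ),
      A.submatrix g id = 1 → (A * Q * Aᵀ).submatrix g g = Q := by
    intro A Q hA
    have h1 : (A * Q * Aᵀ).submatrix g g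
        = (A * Q).submatrix g id * Aᵀ.submatrix id g := by
      rw [Matrix.submatrix_mul _ _ _ _ _ Function.bijective_id]
    have h2 : (A * Q).submatrix g id = A.submatrix g id * Q := by
      rw [Matrix.submatrix_mul _ _ _ _ _ Function.bijective_id,
        Matrix.submatrix_id_id]
    have h3 : Aᵀ.submatrix id g = (A.submatrix g id)ᵀ := rfl
    rw [h1, h2, h3, hA, Matrix.transpose_one, Matrix.mul_one, Matrix.one_mul]
  have hPP' : P = P' := by
    have := congrArg (fun X => X.submatrix g g) heq'
    simpa [hsub M P hMg, hsub M' P' hM'g] using this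
  -- M * P = M' * P'
  have hcol : ∀ (A : Matrix (Fin n) (Fin K) ℝ) (Q : Matrix (Fin K) (Fin K) ℝ),
      A.submatrix g id = 1 → (A * Q * Aᵀ).submatrix id g = A * Q := by
    intro A Q hA
    have h2 : (A * Q * Aᵀ).submatrix id g = A * Q * Aᵀ.submatrix id g := by
      rw [Matrix.submatrix_mul _ _ _ _ _ Function.bijective_id,
        Matrix.submatrix_id_id]
    have h3 : Aᵀ.submatrix id g = (A.submatrix g id)ᵀ := rfl
    rw [h2, h3, hA, Matrix.transpose_one, Matrix.mul_one]
  have hMP : M * P = M' * P' := by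
    have := congrArg (fun X => X.submatrix id g) heq'
    simpa [hcol M P hMg, hcol M' P' hM'g] using this
  -- P is invertible
  have hPu : IsUnit P := by
    rw [← Matrix.mulVec_surjective_iff_isUnit]
    have hr : LinearMap.range P.mulVecLin = ⊤ := by
      apply Submodule.eq_top_of_finrank_eq
      rw [show Module.finrank ℝ (LinearMap.range P.mulVecLin) = P.rank from rfl,
        hP]
      simp [Module.finrank_pi]
    intro v
    have := hr ▸ Submodule.mem_top (R := ℝ) (x := v)
    obtain ⟨w, hw⟩ := this
    exact ⟨w, hw⟩
  have hdet : IsUnit P.det := (Matrix.isUnit_iff_isUnit_det P).mp hPu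
  have hMM' : M = M' := by
    have h1 : M * P * P⁻¹ = M' * P' * P⁻¹ := by rw [hMP]
    rwa [Matrix.mul_assoc, Matrix.mul_assoc, ← hPP',
      Matrix.mul_nonsing_inv P hdet, Matrix.mul_one, Matrix.mul_one] at h1
  exact ⟨hMM', hPP'⟩
end

section
/- Ideal Simplex lemma: under the MMDF setup with Ω = ρ·Π·P·Πᵀ of rank K and compact eigendecomposition Ω = U·Λ·Uᵀ where U ∈ ℝ^{n×K} has orthonormal columns and Λ ∈ ℝ^{K×K} is invertible diagonal, there exists a unique K×K matrix B with U = Π·B, and moreover B = U(I,:) where I is an index set of pure rows with Π(I,:) = I_K. -/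
open Matrix MeasureTheory ProbabilityTheory

lemma mulVec_inj_of_rank {n K : ℕ} (M : Matrix (Fin n) (Fin K) ℝ) (hM : M.rank = K) :
    Function.Injective M.mulVecLin := by
  rw [← LinearMap.ker_eq_bot]
  rw [← Submodule.finrank_eq_zero (R := ℝ)]
  have h := LinearMap.finrank_range_add_finrank_ker M.mulVecLin
  have : M.rank = Module.finrank ℝ (LinearMap.range M.mulVecLin) := rfl
  simp [Matrix.rank, hM] at h
  omega

lemma mul_left_cancel_of_rank {n K : ℕ} (M : Matrix (Fin n) (Fin K) ℝ) (hM : M.rank = K)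
    {B B' : Matrix (Fin K) (Fin K) ℝ} (h : M * B = M * B') : B = B' := by
  ext k j
  have hc : M.mulVec (fun k => B k j) = M.mulVec (fun k => B' k j) := by
    funext i
    have h1 := congrFun (congrFun h i) j
    simpa [Matrix.mul_apply, Matrix.mulVec, dotProduct] using h1
  have := congrFun (mulVec_inj_of_rank M hM hc) k
  simpa using this

theorem stmt_2 {n K : ℕ} (M : Matrix (Fin n) (Fin K) ℝ)
    (P : Matrix (Fin K) (Fin K) ℝ) (ρ : ℝ) (hρ : 0 < ρ)
    (g : Fin K → Fin n)
    (hM : M.rank = K) (hMnn : ∀ i k, 0 ≤ M i k)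
    (hMrow : ∀ i, ∑ k, M i k = 1)
    (hMg : M.submatrix g id = 1)
    (hPs : P.IsSymm) (hP : P.rank = K)
    (U : Matrix (Fin n) (Fin K) ℝ) (Λ : Matrix (Fin K) (Fin K) ℝ)
    (hΛd : Λ.IsDiag) (hΛ : IsUnit Λ.det)
    (hU : Uᵀ * U = 1)
    (hdec : ρ • (M * P * Mᵀ) = U * Λ * Uᵀ) :
    (∃! B : Matrix (Fin K) (Fin K) ℝ, U = M * B) ∧ U = M * U.submatrix g id := by
  set B₀ : Matrix (Fin K) (Fin K) ℝ := (ρ • (P * Mᵀ * U)) * Λ⁻¹ with hB₀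
  have key : M * B₀ = U := by
    have h1 : (ρ • (M * P * Mᵀ)) * U = U * Λ := by
      rw [hdec]
      calc U * Λ * Uᵀ * U = U * Λ * (Uᵀ * U) := by rw [Matrix.mul_assoc]
        _ = U * Λ := by rw [hU, Matrix.mul_one]
    calc M * B₀ = (ρ • (M * P * Mᵀ)) * U * Λ⁻¹ := by
          rw [hB₀]
          simp only [Matrix.mul_smul, Matrix.smul_mul, Matrix.mul_assoc]
      _ = U * Λ * Λ⁻¹ := by rw [h1]
      _ = U := by rw [Matrix.mul_assoc, Matrix.mul_nonsing_inv _ hΛ, Matrix.mul_one]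
  have hsub : U.submatrix g id = B₀ := by
    rw [← key]
    calc (M * B₀).submatrix g id
        = M.submatrix g (Equiv.refl (Fin K)) * B₀.submatrix (Equiv.refl (Fin K)) id := by
          rw [Matrix.submatrix_mul_equiv]
      _ = B₀ := by
          simpa using congrArg (· * B₀) hMg
  refine ⟨⟨B₀, key.symm, ?_⟩, ?_⟩
  · intro B hB
    exact mul_left_cancel_of_rank M hM (key.trans hB) |>.symm
  · rw [hsub, key]
end

section
/- If Ω = U·Λ·Uᵀ with U ∈ ℝ^{n×K}, UᵀU = I_K, and U = Π·B for a membership matrix Π whose rows are probability vectors, then the maximum row ℓ₂-norm of U satisfies ‖U‖_{2→∞}² ≤ 1/λ_K(ΠᵀΠ), where λ_K(ΠᵀΠ) is the smallest eigenvalue of ΠᵀΠ. -/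
open Matrix MeasureTheory ProbabilityTheory

lemma quadform_eq {K : ℕ} {A : Matrix (Fin K) (Fin K) ℝ} (hA : A.IsHermitian) (w : Fin K → ℝ) :
    w ⬝ᵥ A *ᵥ w = ∑ i, hA.eigenvalues i * ((star (hA.eigenvectorUnitary : Matrix (Fin K) (Fin K) ℝ) *ᵥ w) i)^2 := by
  set V : Matrix (Fin K) (Fin K) ℝ := (hA.eigenvectorUnitary : Matrix (Fin K) (Fin K) ℝ) with hV
  set c : Fin K → ℝ := star V *ᵥ w with hc
  conv_lhs => rw [hA.spectral_theorem, Unitary.conjStarAlgAut_apply]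
  rw [← mulVec_mulVec, ← mulVec_mulVec, dotProduct_mulVec, ← mulVec_transpose]
  have hVT : Vᵀ = star V := by
    rw [← conjTranspose_eq_transpose_of_trivial]; rfl
  rw [hVT]
  simp [mulVec_diagonal, dotProduct, diagonal, mulVec, Function.comp]
  refine Finset.sum_congr rfl fun x _ => ?_
  have hcx : c x = ∑ k, V k x * w k := by
    simp [hc, mulVec, dotProduct, Matrix.star_apply]
  have hbx : ∀ k, (hA.eigenvectorBasis x) k = V k x := fun k => (hA.eigenvectorUnitary_apply k x).symm
  simp only [hcx, hbx]
  ring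

lemma normsq_eq {K : ℕ} {A : Matrix (Fin K) (Fin K) ℝ} (hA : A.IsHermitian) (w : Fin K → ℝ) :
    w ⬝ᵥ w = ∑ i, ((star (hA.eigenvectorUnitary : Matrix (Fin K) (Fin K) ℝ) *ᵥ w) i)^2 := by
  set V : Matrix (Fin K) (Fin K) ℝ := (hA.eigenvectorUnitary : Matrix (Fin K) (Fin K) ℝ) with hV
  set c : Fin K → ℝ := star V *ᵥ w with hc
  have h1 : c ⬝ᵥ c = ∑ i, (c i)^2 := by
    simp [dotProduct, pow_two]
  have hVT : (star V)ᵀ = V := by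
    rw [Matrix.star_eq_conjTranspose, conjTranspose_eq_transpose_of_trivial, transpose_transpose]
  have h2 : c ⬝ᵥ c = w ⬝ᵥ w := by
    rw [hc]
    nth_rewrite 1 [dotProduct_mulVec]
    rw [← mulVec_transpose, hVT, mulVec_mulVec]
    have : V * star V = 1 := mem_unitaryGroup_iff.mp hA.eigenvectorUnitary.2
    rw [this, one_mulVec]
  rw [← h2, h1]

lemma rayleigh_lower {K : ℕ} (hK : 0 < K) {A : Matrix (Fin K) (Fin K) ℝ} (hA : A.IsHermitian)
    (w : Fin K → ℝ) : (⨅ i, hA.eigenvalues i) * (w ⬝ᵥ w) ≤ w ⬝ᵥ A *ᵥ w := by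
  haveI : Nonempty (Fin K) := Fin.pos_iff_nonempty.mp hK
  set c : Fin K → ℝ := star (hA.eigenvectorUnitary : Matrix (Fin K) (Fin K) ℝ) *ᵥ w with hc
  rw [quadform_eq hA w, normsq_eq hA w, Finset.mul_sum]
  refine Finset.sum_le_sum fun i _ => ?_
  have h1 : (⨅ j, hA.eigenvalues j) ≤ hA.eigenvalues i :=
    ciInf_le (Set.Finite.bddBelow (Set.finite_range _)) i
  exact mul_le_mul_of_nonneg_right h1 (sq_nonneg _)

theorem stmt_5 {n K : ℕ} (M : Matrix (Fin n) (Fin K) ℝ)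
    (hM : M.rank = K) (hMnn : ∀ i k, 0 ≤ M i k)
    (hMrow : ∀ i, ∑ k, M i k = 1)
    (U : Matrix (Fin n) (Fin K) ℝ) (B : Matrix (Fin K) (Fin K) ℝ)
    (hU : Uᵀ * U = 1) (hUB : U = M * B) :
    (⨆ i, ∑ j, (U i j) ^ 2) ≤ 1 / eigMin (Mᵀ * M) := by
  classical
  have hA : (Mᵀ * M).IsHermitian := by
    have := isHermitian_conjTranspose_mul_self M
    rwa [conjTranspose_eq_transpose_of_trivial] at this
  have hMin : eigMin (Mᵀ * M) = ⨅ i, hA.eigenvalues i := by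
    rw [eigMin, dif_pos hA]
  rcases Nat.eq_zero_or_pos K with hK | hK
  · subst hK
    have h0 : eigMin (Mᵀ * M) = 0 := by rw [hMin, Real.iInf_of_isEmpty]
    rw [h0]
    refine Real.iSup_le (fun i => ?_) (by norm_num)
    simp
  haveI : Nonempty (Fin K) := Fin.pos_iff_nonempty.mp hK
  -- algebraic identities
  have hBAB : Bᵀ * (Mᵀ * M) * B = 1 := by
    calc Bᵀ * (Mᵀ * M) * B = (M * B)ᵀ * (M * B) := by
          rw [transpose_mul]; simp only [Matrix.mul_assoc]
      _ = 1 := by rw [← hUB]; exact hU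
  haveI hBinv : Invertible B := invertibleOfLeftInverse _ _ hBAB
  have hIB : ⅟B = Bᵀ * (Mᵀ * M) := invOf_eq_left_inv hBAB
  have hBBA : (B * Bᵀ) * (Mᵀ * M) = 1 := by
    rw [Matrix.mul_assoc, ← hIB, mul_invOf_self]
  have hABB : (Mᵀ * M) * (B * Bᵀ) = 1 := mul_eq_one_comm.mp hBBA
  -- positivity of eigenvalues
  have hPSD : (Mᵀ * M).PosSemidef := by
    have := posSemidef_conjTranspose_mul_self M
    rwa [conjTranspose_eq_transpose_of_trivial] at this
  have hdet : (Mᵀ * M).det ≠ 0 := by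
    have : (Mᵀ * M).det * (B * Bᵀ).det = 1 := by rw [← det_mul, hABB, det_one]
    exact left_ne_zero_of_mul_eq_one this
  have heigpos : ∀ i, 0 < hA.eigenvalues i := by
    intro i
    rcases lt_or_eq_of_le (hPSD.eigenvalues_nonneg i) with h | h
    · exact h
    · exfalso
      apply hdet
      rw [hA.det_eq_prod_eigenvalues]
      refine Finset.prod_eq_zero (Finset.mem_univ i) ?_
      simp [← h]
  have hlam : 0 < eigMin (Mᵀ * M) := by
    obtain ⟨a, ha⟩ := Finite.exists_min hA.eigenvalues
    have : (⨅ i, hA.eigenvalues i) = hA.eigenvalues a :=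
      le_antisymm (ciInf_le (Set.Finite.bddBelow (Set.finite_range _)) a) (le_ciInf ha)
    rw [hMin, this]
    exact heigpos a
  -- per-row bound
  refine Real.iSup_le (fun i => ?_) (by positivity)
  set x : Fin K → ℝ := fun k => M i k with hx
  set w : Fin K → ℝ := (B * Bᵀ) *ᵥ x with hw
  have hxx : x ⬝ᵥ x ≤ 1 := by
    have h1 : ∀ k, x k ≤ 1 := by
      intro k
      rw [← hMrow i]
      exact Finset.single_le_sum (fun l _ => hMnn i l) (Finset.mem_univ k)
    calc x ⬝ᵥ x = ∑ k, x k * x k := rfl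
      _ ≤ ∑ k, 1 * x k := Finset.sum_le_sum fun k _ =>
          mul_le_mul_of_nonneg_right (h1 k) (hMnn i k)
      _ = 1 := by simp; exact hMrow i
  have hrow : ∑ j, (U i j) ^ 2 = x ⬝ᵥ w := by
    have hUij : ∀ j, U i j = (Bᵀ *ᵥ x) j := by
      intro j
      rw [hUB]
      simp only [Matrix.mul_apply, mulVec, dotProduct, transpose_apply]
      exact Finset.sum_congr rfl fun k _ => mul_comm _ _
    have h2 : x ⬝ᵥ w = (Bᵀ *ᵥ x) ⬝ᵥ (Bᵀ *ᵥ x) := by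
      rw [hw, ← mulVec_mulVec, dotProduct_mulVec, ← mulVec_transpose]
    rw [h2]
    simp only [dotProduct, hUij, pow_two]
  have hAw : (Mᵀ * M) *ᵥ w = x := by
    rw [hw, mulVec_mulVec, hABB, one_mulVec]
  have hquad : w ⬝ᵥ (Mᵀ * M) *ᵥ w = x ⬝ᵥ w := by
    rw [hAw, dotProduct_comm]
  have h1 : eigMin (Mᵀ * M) * (w ⬝ᵥ w) ≤ x ⬝ᵥ w := by
    rw [hMin, ← hquad]
    exact rayleigh_lower hK hA w
  have h2 : (x ⬝ᵥ w) ^ 2 ≤ (x ⬝ᵥ x) * (w ⬝ᵥ w) := by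
    have := Finset.sum_mul_sq_le_sq_mul_sq Finset.univ x w
    calc (x ⬝ᵥ w) ^ 2 = (∑ k, x k * w k) ^ 2 := rfl
      _ ≤ (∑ k, x k ^ 2) * ∑ k, w k ^ 2 := this
      _ = (x ⬝ᵥ x) * (w ⬝ᵥ w) := by simp [dotProduct, pow_two]
  have hww : 0 ≤ w ⬝ᵥ w := Finset.sum_nonneg fun k _ => mul_self_nonneg _
  have hxx0 : 0 ≤ x ⬝ᵥ x := Finset.sum_nonneg fun k _ => mul_self_nonneg _
  rw [hrow, le_div_iff₀ hlam]
  have hs2 : (x ⬝ᵥ w) ^ 2 ≤ w ⬝ᵥ w := by nlinarith [h2, hxx, hww]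
  have h3 : eigMin (Mᵀ * M) * (x ⬝ᵥ w) ^ 2 ≤ x ⬝ᵥ w :=
    le_trans (mul_le_mul_of_nonneg_left hs2 hlam.le) h1
  have hs0 : 0 ≤ x ⬝ᵥ w := le_trans (mul_nonneg hlam.le hww) h1
  rcases eq_or_lt_of_le hs0 with h | h
  · rw [← h]; norm_num
  · nlinarith [h3, h]
end
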